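/- Let p be a prime, T ⊂ Z_p[z_1,...,z_n] a zero-dimensional triangular set, and R = Z_p[z_1,...,z_n]/⟨T_{n-1}⟩ viewed with coefficients liftable p-adically. Suppose t_n ≡ u_0 v_0 (mod ⟨T_{n-1}⟩, p) with u_0, v_0 monic in z_n, and there exist A, B with A u_0 + B v_0 ≡ 1 (mod ⟨T_{n-1}⟩, p). Then for every k ≥ 1 there exist monic polynomials u_k, v_k, unique modulo p^k, such that t_n ≡ u_k v_k (mod ⟨T_{n-1}⟩, p^k), u_k ≡ u_0 (mod p), and v_k ≡ v_0 (mod p). -/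

import Mathlib

section HenselAbstract

open Polynomial

variable {S : Type*} [CommRing S]

/-- The ideal `a + (π^k)` of `S`. -/
def hIk (a : Ideal S) (π : S) (k : ℕ) : Ideal S := a ⊔ Ideal.span {π ^ k}

/-- The ideal of `S[X]` generated by the constants in `a + (π^k)`. -/
noncomputable def hM (a : Ideal S) (π : S) (k : ℕ) : Ideal (Polynomial S) :=
  (hIk a π k).map (Polynomial.C (R := S))

variable {a : Ideal S} {π : S}

lemma mem_hM_iff {h : S[X]} {k : ℕ} : h ∈ hM a π k ↔ ∀ i, h.coeff i ∈ hIk a π k :=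
  Ideal.mem_map_C_iff

lemma hIk_anti {k l : ℕ} (hkl : k ≤ l) : hIk a π l ≤ hIk a π k := by
  refine sup_le_sup_left ?_ _
  rw [Ideal.span_le, Set.singleton_subset_iff]
  exact Ideal.mem_span_singleton.2 (pow_dvd_pow π hkl)

lemma hM_anti {k l : ℕ} (hkl : k ≤ l) : hM a π l ≤ hM a π k := Ideal.map_mono (hIk_anti hkl)

lemma hIk_mul {j l : ℕ} : hIk a π j * hIk a π l ≤ hIk a π (j + l) := by
  rw [Ideal.mul_le]
  intro r hr s hs
  obtain ⟨x, hx, y, hy, rfl⟩ := Submodule.mem_sup.1 hr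
  obtain ⟨x', hx', y', hy', rfl⟩ := Submodule.mem_sup.1 hs
  obtain ⟨c, rfl⟩ := Ideal.mem_span_singleton'.1 hy
  obtain ⟨c', rfl⟩ := Ideal.mem_span_singleton'.1 hy'
  have hexp : (x + c * π ^ j) * (x' + c' * π ^ l)
      = (x * (x' + c' * π ^ l) + (c * π ^ j) * x') + (c * c') * π ^ (j + l) := by ring
  rw [hexp]
  refine Submodule.add_mem _ (Submodule.mem_sup_left ?_)
    (Submodule.mem_sup_right (Ideal.mem_span_singleton'.2 ⟨c * c', rfl⟩))
  exact Ideal.add_mem _ (Ideal.mul_mem_right _ _ hx) (Ideal.mul_mem_left _ _ hx')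

lemma hM_mul {j l : ℕ} {x y : S[X]} (hx : x ∈ hM a π j) (hy : y ∈ hM a π l) :
    x * y ∈ hM a π (j + l) := by
  have h := Ideal.mul_mem_mul hx hy
  rw [hM, hM, ← Ideal.map_mul] at h
  exact Ideal.map_mono hIk_mul h

lemma C_pow_mem_hM (k : ℕ) : (Polynomial.C (π ^ k) : S[X]) ∈ hM a π k :=
  Ideal.mem_map_of_mem _ (Submodule.mem_sup_right (Ideal.mem_span_singleton_self _))

lemma one_mem_hIk (h1 : (1 : S) ∈ hIk a π 1) (k : ℕ) : (1 : S) ∈ hIk a π k := by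
  obtain ⟨x, hx, y, hy, hxy⟩ := Submodule.mem_sup.1 h1
  obtain ⟨c, rfl⟩ := Ideal.mem_span_singleton'.1 hy
  obtain ⟨w, hw⟩ := sub_dvd_pow_sub_pow (1 : S) (c * π ^ 1) k
  refine Submodule.mem_sup.2 ⟨(1 - c * π ^ 1) * w, ?_, c ^ k * π ^ k,
    Ideal.mem_span_singleton'.2 ⟨c ^ k, rfl⟩, ?_⟩
  · refine Ideal.mul_mem_right _ _ ?_
    have hx' : (1 : S) - c * π ^ 1 = x := by linear_combination -hxy
    rwa [hx']
  · linear_combination -hw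

lemma hM_top (h1 : (1 : S) ∈ hIk a π 1) (k : ℕ) : hM a π k = ⊤ := by
  rw [Ideal.eq_top_iff_one]
  have h := Ideal.mem_map_of_mem (Polynomial.C (R := S)) (one_mem_hIk h1 k)
  rwa [map_one] at h

lemma map_mk_eq_zero_iff {b : Ideal S} {h : S[X]} :
    h.map (Ideal.Quotient.mk b) = 0 ↔ h ∈ b.map (Polynomial.C (R := S)) := by
  simp [Polynomial.ext_iff, Polynomial.coeff_map, Ideal.Quotient.eq_zero_iff_mem,
    Ideal.mem_map_C_iff]

lemma key_deg {b : Ideal S} (hb : b ≠ ⊤) {u w α : S[X]} (hu : u.Monic)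
    (h : α - u * w ∈ b.map (Polynomial.C (R := S))) {d' : ℕ}
    (hα : α.degree < ((u.natDegree + d' : ℕ) : WithBot ℕ)) :
    ∀ i, d' ≤ i → w.coeff i ∈ b := by
  haveI : Nontrivial (S ⧸ b) := Ideal.Quotient.nontrivial_iff.mpr hb
  set f := Ideal.Quotient.mk b with hf
  have h0 : α.map f = u.map f * w.map f := by
    have h' := map_mk_eq_zero_iff.2 h
    rwa [Polynomial.map_sub, Polynomial.map_mul, sub_eq_zero] at h'
  have hdeg : (w.map f).degree < (d' : WithBot ℕ) := by
    by_contra hcon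
    push_neg at hcon
    have hum : (u.map f).Monic := hu.map f
    have h1 : ((u.natDegree + d' : ℕ) : WithBot ℕ) ≤ (α.map f).degree := by
      rw [h0, mul_comm, hum.degree_mul]
      have hud : (u.map f).degree = (u.natDegree : WithBot ℕ) := by
        rw [Polynomial.degree_eq_natDegree hum.ne_zero, hu.natDegree_map]
      rw [hud, Nat.cast_add, add_comm ((u.natDegree : WithBot ℕ)) _]
      exact add_le_add hcon le_rfl
    exact absurd (lt_of_le_of_lt (h1.trans Polynomial.degree_map_le) hα) (lt_irrefl _)
  intro i hi
  have hc := Polynomial.coeff_eq_zero_of_degree_lt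
    (lt_of_lt_of_le hdeg (by exact_mod_cast hi))
  rw [Polynomial.coeff_map] at hc
  exact Ideal.Quotient.eq_zero_iff_mem.1 hc

lemma deg_eq_of_sub_mem (hnt : (1 : S) ∉ hIk a π 1) {g h : S[X]} (hg : g.Monic) (hh : h.Monic)
    (hgh : g - h ∈ hM a π 1) : g.natDegree = h.natDegree := by
  rcases lt_trichotomy g.natDegree h.natDegree with hlt | heq | hlt
  · have h1 := mem_hM_iff.1 hgh h.natDegree
    rw [Polynomial.coeff_sub, Polynomial.coeff_eq_zero_of_natDegree_lt hlt, hh.coeff_natDegree,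
      zero_sub] at h1
    exact absurd (by simpa using (hIk a π 1).neg_mem h1) hnt
  · exact heq
  · have h1 := mem_hM_iff.1 hgh g.natDegree
    rw [Polynomial.coeff_sub, Polynomial.coeff_eq_zero_of_natDegree_lt hlt, hg.coeff_natDegree,
      sub_zero] at h1
    exact absurd h1 hnt

lemma hM_decompose {k : ℕ} {e : S[X]} (he : e ∈ hM a π k) :
    ∃ c : S[X], c.degree ≤ e.degree ∧
      e - Polynomial.C (π ^ k) * c ∈ a.map (Polynomial.C (R := S)) := by
  have hc : ∀ i, e.coeff i ∈ hIk a π k := mem_hM_iff.1 he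
  choose x hx y hy hxy using fun i => Submodule.mem_sup.1 (hc i)
  choose c hci using fun i => Ideal.mem_span_singleton'.1 (hy i)
  refine ⟨∑ i ∈ e.support, Polynomial.C (c i) * Polynomial.X ^ i, ?_, ?_⟩
  · refine (Polynomial.degree_sum_le _ _).trans (Finset.sup_le fun i hi => ?_)
    exact (Polynomial.degree_C_mul_X_pow_le _ _).trans
      (Polynomial.le_degree_of_ne_zero (Polynomial.mem_support_iff.1 hi))
  · rw [Ideal.mem_map_C_iff]
    intro j
    rw [Polynomial.coeff_sub, Polynomial.coeff_C_mul, Polynomial.finset_sum_coeff]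
    simp only [Polynomial.coeff_C_mul, Polynomial.coeff_X_pow, mul_ite, mul_one, mul_zero]
    rw [Finset.sum_ite_eq e.support j c]
    by_cases hj : j ∈ e.support
    · rw [if_pos hj]
      have hxj : e.coeff j - π ^ k * c j = x j := by
        linear_combination -hxy j - hci j
      rw [hxj]; exact hx j
    · rw [if_neg hj, mul_zero, sub_zero, Polynomial.notMem_support_iff.1 hj]
      exact Ideal.zero_mem a

lemma hensel_exists (hnt : (1 : S) ∉ hIk a π 1)
    {f u₀ v₀ A B : S[X]} (hf : f.Monic) (hu0 : u₀.Monic) (hv0 : v₀.Monic)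
    (hfac : f - u₀ * v₀ ∈ hM a π 1)
    (hbez : A * u₀ + B * v₀ - 1 ∈ hM a π 1) :
    ∀ k, 1 ≤ k → ∃ u v : S[X], u.Monic ∧ v.Monic ∧
      u.natDegree = u₀.natDegree ∧ v.natDegree = v₀.natDegree ∧
      f - u * v ∈ hM a π k ∧ u - u₀ ∈ hM a π 1 ∧ v - v₀ ∈ hM a π 1 := by
  have hSnt : Nontrivial S := nontrivial_of_ne 1 0
    (fun h01 => hnt (by rw [h01]; exact Submodule.zero_mem _))
  have hb1 : hIk a π 1 ≠ ⊤ := fun htop => hnt (by rw [htop]; trivial)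
  set d := u₀.natDegree with hd
  set d' := v₀.natDegree with hd'
  have hD : f.natDegree = d + d' := by
    have h := deg_eq_of_sub_mem hnt hf (hu0.mul hv0) hfac
    rwa [Polynomial.Monic.natDegree_mul hu0 hv0] at h
  intro k hk
  induction k, hk using Nat.le_induction with
  | base => exact ⟨u₀, v₀, hu0, hv0, rfl, rfl, hfac, by simp, by simp⟩
  | succ k hk ih =>
    obtain ⟨u, v, hu, hv, hud, hvd, hfk, hu1, hv1⟩ := ih
    have hdu : u.degree = (d : WithBot ℕ) := by
      rw [Polynomial.degree_eq_natDegree hu.ne_zero, hud]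
    have hdv : v.degree = (d' : WithBot ℕ) := by
      rw [Polynomial.degree_eq_natDegree hv.ne_zero, hvd]
    obtain ⟨c, hcdeg, hcmem⟩ := hM_decompose hfk
    have huv : (u * v).Monic := hu.mul hv
    have hedeg : (f - u * v).degree < ((d + d' : ℕ) : WithBot ℕ) := by
      have h1 : (f - u * v).degree < f.degree := by
        refine Polynomial.degree_sub_lt ?_ hf.ne_zero ?_
        · rw [Polynomial.degree_eq_natDegree hf.ne_zero,
            Polynomial.degree_eq_natDegree huv.ne_zero, hD,
            Polynomial.Monic.natDegree_mul hu hv, hud, hvd]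
        · rw [hf.leadingCoeff, huv.leadingCoeff]
      rwa [Polynomial.degree_eq_natDegree hf.ne_zero, hD] at h1
    have hcdeg' : c.degree < ((d + d' : ℕ) : WithBot ℕ) := lt_of_le_of_lt hcdeg hedeg
    set δ := (B * c) %ₘ u₀ with hδdef
    set q := (B * c) /ₘ u₀ with hqdef
    have hdiv : δ + u₀ * q = B * c := Polynomial.modByMonic_add_div (B * c) u₀
    have hδdeg : δ.degree < (d : WithBot ℕ) := by
      have h := Polynomial.degree_modByMonic_lt (B * c) hu0
      rwa [Polynomial.degree_eq_natDegree hu0.ne_zero] at h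
    set ε' := A * c + q * v with hε'def
    have hAB : A * u + B * v - 1 ∈ hM a π 1 := by
      have hid : A * u + B * v - 1
          = (A * u₀ + B * v₀ - 1) + A * (u - u₀) + B * (v - v₀) := by ring
      rw [hid]
      exact Ideal.add_mem _ (Ideal.add_mem _ hbez (Ideal.mul_mem_left _ _ hu1))
        (Ideal.mul_mem_left _ _ hv1)
    have hkey : c - (δ * v + ε' * u) ∈ hM a π 1 := by
      have hid : c - (δ * v + ε' * u)
          = (-c) * (A * u + B * v - 1) + (-(q * v)) * (u - u₀) := by
        rw [hε'def]; linear_combination (-v) * hdiv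
      rw [hid]
      exact Ideal.add_mem _ (Ideal.mul_mem_left _ _ hAB) (Ideal.mul_mem_left _ _ hu1)
    have hαdeg : (c - δ * v).degree < ((u.natDegree + d' : ℕ) : WithBot ℕ) := by
      rw [hud]
      refine lt_of_le_of_lt (Polynomial.degree_sub_le _ _) (max_lt hcdeg' ?_)
      refine lt_of_le_of_lt (Polynomial.degree_mul_le _ _) ?_
      rw [hdv, Nat.cast_add]
      exact WithBot.add_lt_add_right (by exact_mod_cast WithBot.coe_ne_bot) hδdeg
    have hcoeffs : ∀ i, d' ≤ i → ε'.coeff i ∈ hIk a π 1 := by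
      refine key_deg hb1 hu ?_ hαdeg
      have hid : (c - δ * v) - u * ε' = c - (δ * v + ε' * u) := by ring
      rw [hid]
      exact hkey
    set ε : S[X] := ∑ i ∈ Finset.range d', Polynomial.C (ε'.coeff i) * Polynomial.X ^ i
      with hεdef
    have hεcoeff : ∀ j, ε.coeff j = if j ∈ Finset.range d' then ε'.coeff j else 0 := by
      intro j
      rw [hεdef, Polynomial.finset_sum_coeff]
      simp only [Polynomial.coeff_C_mul, Polynomial.coeff_X_pow, mul_ite, mul_one, mul_zero]
      exact Finset.sum_ite_eq _ j _
    have hεdeg : ε.degree < (d' : WithBot ℕ) := by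
      refine lt_of_le_of_lt (Polynomial.degree_sum_le _ _) ?_
      rw [Finset.sup_lt_iff (by exact_mod_cast WithBot.bot_lt_coe d')]
      intro i hi
      exact lt_of_le_of_lt (Polynomial.degree_C_mul_X_pow_le _ _)
        (by exact_mod_cast Finset.mem_range.1 hi)
    have hεε' : ε' - ε ∈ hM a π 1 := by
      rw [mem_hM_iff]
      intro i
      rw [Polynomial.coeff_sub, hεcoeff i]
      by_cases hi : i ∈ Finset.range d'
      · rw [if_pos hi, sub_self]; exact Submodule.zero_mem _
      · rw [if_neg hi, sub_zero]
        exact hcoeffs i (le_of_not_gt fun h => hi (Finset.mem_range.2 h))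
    have hδsmall : (Polynomial.C (π ^ k) * δ).degree < u.degree := by
      rw [hdu]
      refine lt_of_le_of_lt (Polynomial.degree_mul_le _ _) ?_
      refine lt_of_le_of_lt (add_le_add Polynomial.degree_C_le le_rfl) ?_
      simpa using hδdeg
    have hεsmall : (Polynomial.C (π ^ k) * ε).degree < v.degree := by
      rw [hdv]
      refine lt_of_le_of_lt (Polynomial.degree_mul_le _ _) ?_
      refine lt_of_le_of_lt (add_le_add Polynomial.degree_C_le le_rfl) ?_
      simpa using hεdeg
    refine ⟨u + Polynomial.C (π ^ k) * δ, v + Polynomial.C (π ^ k) * ε,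
      hu.add_of_left hδsmall, hv.add_of_left hεsmall, ?_, ?_, ?_, ?_, ?_⟩
    · rw [← hud]
      apply Polynomial.natDegree_eq_of_degree_eq_some
      rw [Polynomial.degree_add_eq_left_of_degree_lt hδsmall, hdu, hud]
    · rw [← hvd]
      apply Polynomial.natDegree_eq_of_degree_eq_some
      rw [Polynomial.degree_add_eq_left_of_degree_lt hεsmall, hdv, hvd]
    · have hterm2 : Polynomial.C (π ^ k) * (c - (δ * v + ε * u)) ∈ hM a π (k + 1) := by
        refine hM_mul (C_pow_mem_hM k) ?_
        have hid : c - (δ * v + ε * u) = (c - (δ * v + ε' * u)) + (ε' - ε) * u := by ring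
        rw [hid]
        exact Ideal.add_mem _ hkey (Ideal.mul_mem_right _ _ hεε')
      have hterm3 : (Polynomial.C (π ^ k) * δ) * (Polynomial.C (π ^ k) * ε)
          ∈ hM a π (k + 1) := by
        refine hM_anti (by omega) (hM_mul (j := k) (l := k) ?_ ?_) <;>
          exact Ideal.mul_mem_right _ _ (C_pow_mem_hM k)
      have hIa : a.map (Polynomial.C (R := S)) ≤ hM a π (k + 1) := Ideal.map_mono le_sup_left
      have hbig : f - (u + Polynomial.C (π ^ k) * δ) * (v + Polynomial.C (π ^ k) * ε)
          = (f - u * v - Polynomial.C (π ^ k) * c)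
            + Polynomial.C (π ^ k) * (c - (δ * v + ε * u))
            + (-((Polynomial.C (π ^ k) * δ) * (Polynomial.C (π ^ k) * ε))) := by ring
      rw [hbig]
      exact Ideal.add_mem _ (Ideal.add_mem _ (hIa hcmem) hterm2) (Submodule.neg_mem _ hterm3)
    · have hid : u + Polynomial.C (π ^ k) * δ - u₀ = (u - u₀) + Polynomial.C (π ^ k) * δ := by
        ring
      rw [hid]
      exact Ideal.add_mem _ hu1
        (hM_anti hk (Ideal.mul_mem_right _ _ (C_pow_mem_hM k)))
    · have hid : v + Polynomial.C (π ^ k) * ε - v₀ = (v - v₀) + Polynomial.C (π ^ k) * ε := by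
        ring
      rw [hid]
      exact Ideal.add_mem _ hv1
        (hM_anti hk (Ideal.mul_mem_right _ _ (C_pow_mem_hM k)))

lemma hensel_unique (hnt : (1 : S) ∉ hIk a π 1)
    {u v u' v' A B : S[X]} (hu : u.Monic) (hv : v.Monic) (hu' : u'.Monic) (hv' : v'.Monic)
    (hdu : u.natDegree = u'.natDegree) (hdv : v.natDegree = v'.natDegree)
    (hAB : A * u + B * v - 1 ∈ hM a π 1)
    {k : ℕ} (hk : 1 ≤ k) (hprod : u * v - u' * v' ∈ hM a π k)
    (h1 : u - u' ∈ hM a π 1) (h2 : v - v' ∈ hM a π 1) :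
    u - u' ∈ hM a π k ∧ v - v' ∈ hM a π k := by
  have hSnt : Nontrivial S := nontrivial_of_ne 1 0
    (fun h01 => hnt (by rw [h01]; exact Submodule.zero_mem _))
  have hbne : ∀ j : ℕ, 1 ≤ j → hIk a π j ≠ ⊤ := by
    intro j hj htop
    exact hnt (hIk_anti hj (htop ▸ Submodule.mem_top))
  have hαdeg : (u - u').degree < ((u.natDegree + 0 : ℕ) : WithBot ℕ) := by
    rw [Nat.add_zero]
    have h := Polynomial.degree_sub_lt (p := u) (q := u')
      (by rw [Polynomial.degree_eq_natDegree hu.ne_zero,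
        Polynomial.degree_eq_natDegree hu'.ne_zero, hdu]) hu.ne_zero
      (by rw [hu.leadingCoeff, hu'.leadingCoeff])
    rwa [Polynomial.degree_eq_natDegree hu.ne_zero] at h
  have hβdeg : (v - v').degree < ((v.natDegree + 0 : ℕ) : WithBot ℕ) := by
    rw [Nat.add_zero]
    have h := Polynomial.degree_sub_lt (p := v) (q := v')
      (by rw [Polynomial.degree_eq_natDegree hv.ne_zero,
        Polynomial.degree_eq_natDegree hv'.ne_zero, hdv]) hv.ne_zero
      (by rw [hv.leadingCoeff, hv'.leadingCoeff])
    rwa [Polynomial.degree_eq_natDegree hv.ne_zero] at h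
  suffices H : ∀ j, 1 ≤ j → j ≤ k → u - u' ∈ hM a π j ∧ v - v' ∈ hM a π j from H k hk le_rfl
  intro j hj
  induction j, hj using Nat.le_induction with
  | base => exact fun _ => ⟨h1, h2⟩
  | succ j hj ih =>
    intro hjk
    obtain ⟨hα, hβ⟩ := ih (le_trans (Nat.le_succ j) hjk)
    have hγ : (u - u') * v + u * (v - v') ∈ hM a π (j + 1) := by
      have hid : (u - u') * v + u * (v - v') = (u * v - u' * v') + (u - u') * (v - v') := by
        ring
      rw [hid]
      exact Ideal.add_mem _ (hM_anti hjk hprod) (hM_anti (by omega) (hM_mul hα hβ))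
    constructor
    · have hw : (u - u') - u * (A * (u - u') - B * (v - v')) ∈ hM a π (j + 1) := by
        have hid : (u - u') - u * (A * (u - u') - B * (v - v'))
            = B * ((u - u') * v + u * (v - v')) - (u - u') * (A * u + B * v - 1) := by ring
        rw [hid]
        exact Submodule.sub_mem _ (Ideal.mul_mem_left _ _ hγ) (hM_mul hα hAB)
      have hwc := key_deg (hbne (j + 1) (by omega)) hu hw hαdeg
      have hwmem : A * (u - u') - B * (v - v') ∈ hM a π (j + 1) :=
        mem_hM_iff.2 fun i => hwc i (Nat.zero_le i)
      have hid : u - u' = ((u - u') - u * (A * (u - u') - B * (v - v')))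
          + u * (A * (u - u') - B * (v - v')) := by ring
      rw [hid]
      exact Ideal.add_mem _ hw (Ideal.mul_mem_left _ _ hwmem)
    · have hw : (v - v') - v * (B * (v - v') - A * (u - u')) ∈ hM a π (j + 1) := by
        have hid : (v - v') - v * (B * (v - v') - A * (u - u'))
            = A * ((u - u') * v + u * (v - v')) - (v - v') * (A * u + B * v - 1) := by ring
        rw [hid]
        exact Submodule.sub_mem _ (Ideal.mul_mem_left _ _ hγ) (hM_mul hβ hAB)
      have hwc := key_deg (hbne (j + 1) (by omega)) hv hw hβdeg
      have hwmem : B * (v - v') - A * (u - u') ∈ hM a π (j + 1) :=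
        mem_hM_iff.2 fun i => hwc i (Nat.zero_le i)
      have hid : v - v' = ((v - v') - v * (B * (v - v') - A * (u - u')))
          + v * (B * (v - v') - A * (u - u')) := by ring
      rw [hid]
      exact Ideal.add_mem _ hw (Ideal.mul_mem_left _ _ hwmem)

end HenselAbstract



open MvPolynomial

/-- `f` is monic of positive degree in the variable `i`. -/
def MonicInVar {k : Type*} [CommRing k] {n : ℕ} (f : MvPolynomial (Fin n) k) (i : Fin n) : Prop :=
  ∃ (d : ℕ) (r : MvPolynomial (Fin n) k), 0 < d ∧ degreeOf i r < d ∧ f = X i ^ d + r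

/-- `t` is a (zero-dimensional) triangular set. -/
def IsTriangularSet {k : Type*} [CommRing k] {n : ℕ}
    (t : Fin n → MvPolynomial (Fin n) k) : Prop :=
  ∀ i, MonicInVar (t i) i ∧ (∀ j, i < j → degreeOf j (t i) = 0) ∧
    ∀ j, j < i → degreeOf j (t i) < degreeOf j (t j)

/-- The isomorphism sending the variable `z` to the polynomial variable. -/
noncomputable def hφ (m : ℕ) (z : Fin (m + 1)) :
    MvPolynomial (Fin (m + 1)) ℤ ≃ₐ[ℤ] Polynomial (MvPolynomial (Fin m) ℤ) :=
  (renameEquiv ℤ (Equiv.swap z 0)).trans (MvPolynomial.finSuccEquiv ℤ m)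

lemma hφ_apply (m : ℕ) (z : Fin (m + 1)) (f : MvPolynomial (Fin (m + 1)) ℤ) :
    hφ m z f = MvPolynomial.finSuccEquiv ℤ m (rename (Equiv.swap z 0) f) := rfl

lemma hφ_natDegree (m : ℕ) (z : Fin (m + 1)) (f : MvPolynomial (Fin (m + 1)) ℤ) :
    (hφ m z f).natDegree = degreeOf z f := by
  rw [hφ_apply, natDegree_finSuccEquiv]
  have h := degreeOf_rename_of_injective (p := f) (Equiv.injective (Equiv.swap z 0)) z
  rwa [Equiv.swap_apply_left] at h

lemma hφ_X (m : ℕ) (z : Fin (m + 1)) : hφ m z (X z) = Polynomial.X := by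
  rw [hφ_apply, rename_X, Equiv.swap_apply_left, finSuccEquiv_X_zero]

lemma monicInVar_iff (m : ℕ) (z : Fin (m + 1)) (f : MvPolynomial (Fin (m + 1)) ℤ) :
    MonicInVar f z ↔ (hφ m z f).Monic ∧ 0 < (hφ m z f).natDegree := by
  constructor
  · rintro ⟨d, r, hd, hr, rfl⟩
    have hXd : hφ m z (X z ^ d + r) = Polynomial.X ^ d + hφ m z r := by
      rw [map_add, map_pow, hφ_X]
    have hrdeg : (hφ m z r).degree < (d : WithBot ℕ) := by
      rcases eq_or_ne (hφ m z r) 0 with h0 | h0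
      · rw [h0, Polynomial.degree_zero]
        exact_mod_cast WithBot.bot_lt_coe d
      · rw [Polynomial.degree_eq_natDegree h0, hφ_natDegree]
        exact_mod_cast hr
    have hXdeg : (Polynomial.X ^ d : Polynomial (MvPolynomial (Fin m) ℤ)).degree
        = (d : WithBot ℕ) := Polynomial.degree_X_pow d
    have hdeg : (hφ m z (X z ^ d + r)).degree = (d : WithBot ℕ) := by
      rw [hXd, Polynomial.degree_add_eq_left_of_degree_lt (by rw [hXdeg]; exact hrdeg), hXdeg]
    refine ⟨?_, ?_⟩
    · rw [hXd]
      exact Polynomial.monic_X_pow_add hrdeg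
    · rw [Polynomial.natDegree_eq_of_degree_eq_some hdeg]
      exact hd
  · rintro ⟨hm, hd⟩
    set g := hφ m z f with hg
    refine ⟨g.natDegree, (hφ m z).symm (g - Polynomial.X ^ g.natDegree), hd, ?_, ?_⟩
    · have hne : g ≠ 0 := hm.ne_zero
      have hdlt : (g - Polynomial.X ^ g.natDegree).degree < (g.natDegree : WithBot ℕ) := by
        have h := Polynomial.degree_sub_lt (p := g) (q := Polynomial.X ^ g.natDegree)
          (by rw [Polynomial.degree_eq_natDegree hne, Polynomial.degree_X_pow]) hne
          (by rw [hm.leadingCoeff, (Polynomial.monic_X_pow _).leadingCoeff])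
        rwa [Polynomial.degree_eq_natDegree hne] at h
      rw [← hφ_natDegree m z, AlgEquiv.apply_symm_apply]
      rcases eq_or_ne (g - Polynomial.X ^ g.natDegree) 0 with h0 | h0
      · rw [h0, Polynomial.natDegree_zero]
        exact hd
      · exact (Polynomial.natDegree_lt_iff_degree_lt h0).2 hdlt
    · apply (hφ m z).injective
      rw [map_add, map_pow, hφ_X, AlgEquiv.apply_symm_apply, ← hg]
      ring

/-- Hensel lifting over a triangular set: if `t_n ≡ u₀v₀ (mod ⟨T_{n-1}⟩, p)` with `u₀, v₀`
monic in `z_n` and `u₀, v₀` comaximal modulo `(⟨T_{n-1}⟩, p)`, then for every `k ≥ 1` there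
are monic `u_k, v_k`, unique modulo `(⟨T_{n-1}⟩, p^k)`, with `t_n ≡ u_k v_k (mod ⟨T_{n-1}⟩, p^k)`,
`u_k ≡ u₀` and `v_k ≡ v₀ (mod ⟨T_{n-1}⟩, p)`. -/
theorem hensel_lift_triangular {n : ℕ} (hn : 1 ≤ n) (p : ℕ) (hp : p.Prime)
    (t : Fin n → MvPolynomial (Fin n) ℤ) (ht : IsTriangularSet t)
    (z : Fin n) (hz : (z : ℕ) = n - 1)
    (J : Ideal (MvPolynomial (Fin n) ℤ))
    (hJ : J = Ideal.span {f | ∃ i : Fin n, (i : ℕ) < n - 1 ∧ f = t i})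
    (u₀ v₀ : MvPolynomial (Fin n) ℤ)
    (hu₀ : MonicInVar u₀ z) (hv₀ : MonicInVar v₀ z)
    (hfac : t z - u₀ * v₀ ∈ J + Ideal.span {(p : MvPolynomial (Fin n) ℤ)})
    (hbez : ∃ A B : MvPolynomial (Fin n) ℤ,
      A * u₀ + B * v₀ - 1 ∈ J + Ideal.span {(p : MvPolynomial (Fin n) ℤ)}) :
    ∀ k : ℕ, 1 ≤ k → ∃ u v : MvPolynomial (Fin n) ℤ,
      MonicInVar u z ∧ MonicInVar v z ∧
      t z - u * v ∈ J + Ideal.span {(p : MvPolynomial (Fin n) ℤ) ^ k} ∧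
      u - u₀ ∈ J + Ideal.span {(p : MvPolynomial (Fin n) ℤ)} ∧
      v - v₀ ∈ J + Ideal.span {(p : MvPolynomial (Fin n) ℤ)} ∧
      ∀ u' v' : MvPolynomial (Fin n) ℤ, MonicInVar u' z → MonicInVar v' z →
        t z - u' * v' ∈ J + Ideal.span {(p : MvPolynomial (Fin n) ℤ) ^ k} →
        u' - u₀ ∈ J + Ideal.span {(p : MvPolynomial (Fin n) ℤ)} →
        v' - v₀ ∈ J + Ideal.span {(p : MvPolynomial (Fin n) ℤ)} →
        u - u' ∈ J + Ideal.span {(p : MvPolynomial (Fin n) ℤ) ^ k} ∧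
        v - v' ∈ J + Ideal.span {(p : MvPolynomial (Fin n) ℤ) ^ k} := by
  subst hJ
  obtain ⟨m, rfl⟩ : ∃ m, n = m + 1 := ⟨n - 1, by omega⟩
  rw [Nat.add_sub_cancel] at hz
  simp only [Nat.add_sub_cancel] at hfac hbez ⊢
  have hpow1 : Ideal.span {(p : MvPolynomial (Fin (m + 1)) ℤ)}
      = Ideal.span {(p : MvPolynomial (Fin (m + 1)) ℤ) ^ 1} := by rw [pow_one]
  simp only [hpow1] at hfac hbez ⊢
  set S' := MvPolynomial (Fin m) ℤ with hS'
  set φ := hφ m z with hφdef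
  set ρ : MvPolynomial (Fin (m + 1)) ℤ ≃+* Polynomial S' := φ.toRingEquiv with hρ
  have hconst : ∀ i : Fin (m + 1), (i : ℕ) < m → ∃ g : S', Polynomial.C g = φ (t i) := by
    intro i him
    rw [← Polynomial.natDegree_eq_zero, hφ_natDegree]
    exact (ht i).2.1 z (by rw [Fin.lt_def, hz]; exact him)
  set a : Ideal S' := Ideal.span
    {g : S' | ∃ i : Fin (m + 1), (i : ℕ) < m ∧ Polynomial.C g = φ (t i)} with ha
  have hmem : ∀ (k : ℕ) (x : MvPolynomial (Fin (m + 1)) ℤ),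
      x ∈ Ideal.span {f | ∃ i : Fin (m + 1), (i : ℕ) < m ∧ f = t i}
          + Ideal.span {(p : MvPolynomial (Fin (m + 1)) ℤ) ^ k}
        ↔ φ x ∈ hM a (p : S') k := by
    intro k x
    have himg : (⇑ρ) '' {f | ∃ i : Fin (m + 1), (i : ℕ) < m ∧ f = t i}
        = ⇑(Polynomial.C (R := S')) ''
          {g : S' | ∃ i : Fin (m + 1), (i : ℕ) < m ∧ Polynomial.C g = φ (t i)} := by
      ext y
      constructor
      · rintro ⟨f, ⟨i, him, rfl⟩, rfl⟩
        obtain ⟨g, hg⟩ := hconst i him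
        exact ⟨g, ⟨i, him, hg⟩, hg⟩
      · rintro ⟨g, ⟨i, him, hg⟩, rfl⟩
        exact ⟨t i, ⟨i, him, rfl⟩, hg.symm⟩
    have hρp : ρ ((p : MvPolynomial (Fin (m + 1)) ℤ) ^ k) = Polynomial.C ((p : S') ^ k) := by
      rw [map_pow, map_natCast, map_pow, Polynomial.C_eq_natCast]
    have hmapeq : Ideal.map ρ (Ideal.span {f | ∃ i : Fin (m + 1), (i : ℕ) < m ∧ f = t i}
        + Ideal.span {(p : MvPolynomial (Fin (m + 1)) ℤ) ^ k}) = hM a (p : S') k := by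
      rw [Submodule.add_eq_sup, Ideal.map_sup, Ideal.map_span, Ideal.map_span, himg,
        Set.image_singleton, hρp, hM, hIk, Ideal.map_sup, Ideal.map_span, Ideal.map_span,
        Set.image_singleton]
    rw [← hmapeq]
    exact (Ideal.apply_mem_of_equiv_iff (f := ρ)).symm
  obtain ⟨A, B, hbezAB⟩ := hbez
  have hfm : (φ (t z)).Monic := ((monicInVar_iff m z _).1 (ht z).1).1
  have hu0m : (φ u₀).Monic := ((monicInVar_iff m z _).1 hu₀).1
  have hv0m : (φ v₀).Monic := ((monicInVar_iff m z _).1 hv₀).1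
  have hfacφ : φ (t z) - φ u₀ * φ v₀ ∈ hM a (p : S') 1 := by
    have h := (hmem 1 _).1 hfac
    rwa [map_sub, map_mul] at h
  have hbezφ : φ A * φ u₀ + φ B * φ v₀ - 1 ∈ hM a (p : S') 1 := by
    have h := (hmem 1 _).1 hbezAB
    rwa [map_sub, map_add, map_mul, map_mul, map_one] at h
  intro k hk
  by_cases htop : (1 : S') ∈ hIk a (p : S') 1
  · have htop' : ∀ l : ℕ, ∀ x : MvPolynomial (Fin (m + 1)) ℤ,
        x ∈ Ideal.span {f | ∃ i : Fin (m + 1), (i : ℕ) < m ∧ f = t i}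
          + Ideal.span {(p : MvPolynomial (Fin (m + 1)) ℤ) ^ l} := by
      intro l x
      rw [hmem l, hM_top htop l]
      trivial
    exact ⟨u₀, v₀, hu₀, hv₀, htop' k _, htop' 1 _, htop' 1 _,
      fun u' v' _ _ _ _ _ => ⟨htop' k _, htop' k _⟩⟩
  · obtain ⟨u1, v1, hu1m, hv1m, hu1d, hv1d, hfk, hu11, hv11⟩ :=
      hensel_exists htop hfm hu0m hv0m hfacφ hbezφ k hk
    refine ⟨φ.symm u1, φ.symm v1, ?_, ?_, ?_, ?_, ?_, ?_⟩
    · rw [monicInVar_iff m z, AlgEquiv.apply_symm_apply]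
      exact ⟨hu1m, by rw [hu1d]; exact ((monicInVar_iff m z _).1 hu₀).2⟩
    · rw [monicInVar_iff m z, AlgEquiv.apply_symm_apply]
      exact ⟨hv1m, by rw [hv1d]; exact ((monicInVar_iff m z _).1 hv₀).2⟩
    · rw [hmem k, map_sub, map_mul, AlgEquiv.apply_symm_apply, AlgEquiv.apply_symm_apply]
      exact hfk
    · rw [hmem 1, map_sub, AlgEquiv.apply_symm_apply]
      exact hu11
    · rw [hmem 1, map_sub, AlgEquiv.apply_symm_apply]
      exact hv11
    · intro u' v' hu'm hv'm hfac' hu'0 hv'0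
      have hu'φ : (φ u').Monic := ((monicInVar_iff m z _).1 hu'm).1
      have hv'φ : (φ v').Monic := ((monicInVar_iff m z _).1 hv'm).1
      have hu'0φ : φ u' - φ u₀ ∈ hM a (p : S') 1 := by
        have h := (hmem 1 _).1 hu'0
        rwa [map_sub] at h
      have hv'0φ : φ v' - φ v₀ ∈ hM a (p : S') 1 := by
        have h := (hmem 1 _).1 hv'0
        rwa [map_sub] at h
      have hfac'φ : φ (t z) - φ u' * φ v' ∈ hM a (p : S') k := by
        have h := (hmem k _).1 hfac'
        rwa [map_sub, map_mul] at h
      have hdu : u1.natDegree = (φ u').natDegree := by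
        refine deg_eq_of_sub_mem htop hu1m hu'φ ?_
        have hid : u1 - φ u' = (u1 - φ u₀) - (φ u' - φ u₀) := by ring
        rw [hid]
        exact Submodule.sub_mem _ hu11 hu'0φ
      have hdv : v1.natDegree = (φ v').natDegree := by
        refine deg_eq_of_sub_mem htop hv1m hv'φ ?_
        have hid : v1 - φ v' = (v1 - φ v₀) - (φ v' - φ v₀) := by ring
        rw [hid]
        exact Submodule.sub_mem _ hv11 hv'0φ
      have hAB1 : φ A * u1 + φ B * v1 - 1 ∈ hM a (p : S') 1 := by
        have hid : φ A * u1 + φ B * v1 - 1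
            = (φ A * φ u₀ + φ B * φ v₀ - 1) + φ A * (u1 - φ u₀) + φ B * (v1 - φ v₀) := by
          ring
        rw [hid]
        exact Ideal.add_mem _ (Ideal.add_mem _ hbezφ (Ideal.mul_mem_left _ _ hu11))
          (Ideal.mul_mem_left _ _ hv11)
      have hprod : u1 * v1 - φ u' * φ v' ∈ hM a (p : S') k := by
        have hid : u1 * v1 - φ u' * φ v'
            = (φ (t z) - φ u' * φ v') - (φ (t z) - u1 * v1) := by ring
        rw [hid]
        exact Submodule.sub_mem _ hfac'φ hfk
      have hsub1 : u1 - φ u' ∈ hM a (p : S') 1 := by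
        have hid : u1 - φ u' = (u1 - φ u₀) - (φ u' - φ u₀) := by ring
        rw [hid]
        exact Submodule.sub_mem _ hu11 hu'0φ
      have hsub2 : v1 - φ v' ∈ hM a (p : S') 1 := by
        have hid : v1 - φ v' = (v1 - φ v₀) - (φ v' - φ v₀) := by ring
        rw [hid]
        exact Submodule.sub_mem _ hv11 hv'0φ
      obtain ⟨hfin1, hfin2⟩ := hensel_unique htop hu1m hv1m hu'φ hv'φ hdu hdv hAB1 hk
        hprod hsub1 hsub2
      constructor
      · rw [hmem k, map_sub, AlgEquiv.apply_symm_apply]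
        exact hfin1
      · rw [hmem k, map_sub, AlgEquiv.apply_symm_apply]
        exact hfin2
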